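/- arXiv:2603.23548 — 5 statements merged into one kernel-verified Lean document; each statement's English description precedes it below -/
import Mathlib

section
/- Let κ be a regular uncountable cardinal and λ a cardinal. For every ordinal δ with 0 < δ < κ and every sequence (B_i)_{i<δ} of elements of R(κ,λ) that is increasing with respect to inclusion (i < j < δ implies B_i ⊆ B_j), the union ⋃_{i<δ} B_i again belongs to R(κ,λ). (Hence R(κ,λ), ordered by B₁ ≤ B₂ iff B₂ ⊆ B₁, is a κ-closed partial order.) -/
open Cardinal Set

/-- `C` is closed and unbounded (club) in the ordinal `o`: `C ⊆ o`, `C` is unbounded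
in `o`, and for every nonempty `X ⊆ C` with `sup X < o` one has `sup X ∈ C`. -/
def IsClubIn (C : Set Ordinal.{0}) (o : Ordinal.{0}) : Prop :=
  C ⊆ Set.Iio o ∧
  (∀ η < o, ∃ γ ∈ C, η < γ) ∧
  ∀ X ⊆ C, X.Nonempty → sSup X < o → sSup X ∈ C

/-- Baumgartner's partial order `R(κ,λ)`: subsets `B` of `λ × 2 × κ`
(here `2` is rendered as `Bool`, with `false` for `0` and `true` for `1`) such that
`|B| ≤ κ`, never both `(α,0,β) ∈ B` and `(α,1,β) ∈ B`, and for each `α < λ` the set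
`{β < κ : (α,0,β) ∉ B ∧ (α,1,β) ∉ B}` is club in `κ`. -/
def RSet (κ lam : Cardinal.{0}) : Set (Set (Ordinal.{0} × Bool × Ordinal.{0})) :=
  {B | B ⊆ {p | p.1 < lam.ord ∧ p.2.2 < κ.ord} ∧
       Cardinal.mk ↥B ≤ Cardinal.lift.{1} κ ∧
       (∀ α β, ¬((α, false, β) ∈ B ∧ (α, true, β) ∈ B)) ∧
       ∀ α < lam.ord,
         IsClubIn {β | β < κ.ord ∧ (α, false, β) ∉ B ∧ (α, true, β) ∉ B} κ.ord}

/-- For regular uncountable `κ`, the union of an increasing chain of fewer than `κ`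
elements of `R(κ,λ)` again belongs to `R(κ,λ)`; i.e. `R(κ,λ)` is `κ`-closed. -/
theorem rSet_kappa_closed (κ lam : Cardinal.{0}) (hreg : κ.IsRegular) (hunc : ℵ₀ < κ)
    (δ : Ordinal.{0}) (hδ0 : 0 < δ) (hδκ : δ < κ.ord)
    (B : Ordinal.{0} → Set (Ordinal.{0} × Bool × Ordinal.{0}))
    (hB : ∀ i < δ, B i ∈ RSet κ lam)
    (hmono : ∀ i j, i < j → j < δ → B i ⊆ B j) :
    (⋃ i ∈ Set.Iio δ, B i) ∈ RSet κ lam := by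
  classical
  set o := κ.ord with ho
  have hδcard : δ.card < κ := Cardinal.lt_ord.mp hδκ
  have hsub : ∀ i j, i ≤ j → j < δ → B i ⊆ B j := by
    intro i j hij hj
    rcases hij.lt_or_eq with h | h
    · exact hmono i j h hj
    · exact h ▸ subset_rfl
  haveI : Nonempty (Set.Iio δ) := ⟨⟨0, hδ0⟩⟩
  refine ⟨?_, ?_, ?_, ?_⟩
  · intro p hp
    rw [mem_iUnion₂] at hp
    obtain ⟨i, hi, hp⟩ := hp
    exact (hB i hi).1 hp
  · calc #(⋃ i ∈ Set.Iio δ, B i) ≤ #(Set.Iio δ) * ⨆ i : (Set.Iio δ), #(B i) :=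
        Cardinal.mk_biUnion_le _ _
    _ ≤ Cardinal.lift.{1} κ * Cardinal.lift.{1} κ := by
        apply mul_le_mul'
        · rw [Ordinal.mk_Iio_ordinal]
          exact Cardinal.lift_le.mpr hδcard.le
        · exact ciSup_le' fun i => (hB i i.2).2.1
    _ = Cardinal.lift.{1} κ :=
        Cardinal.mul_eq_self (Cardinal.aleph0_le_lift.mpr hreg.aleph0_le)
  · rintro α β ⟨h0, h1⟩
    rw [mem_iUnion₂] at h0 h1
    obtain ⟨i, hi, h0⟩ := h0
    obtain ⟨j, hj, h1⟩ := h1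
    rcases le_total i j with hij | hij
    · exact (hB j hj).2.2.1 α β ⟨hsub i j hij hj h0, h1⟩
    · exact (hB i hi).2.2.1 α β ⟨h0, hsub j i hij hi h1⟩
  · intro α hα
    set S : Ordinal → Set Ordinal :=
      fun i => {β | β < o ∧ (α, false, β) ∉ B i ∧ (α, true, β) ∉ B i} with hS
    have hclub : ∀ i, i < δ → IsClubIn (S i) o := fun i hi => (hB i hi).2.2.2 α hα
    have hmemU : ∀ (b : Bool) (β : Ordinal),
        (α, b, β) ∈ (⋃ i ∈ Set.Iio δ, B i) ↔ ∃ i < δ, (α, b, β) ∈ B i := by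
      intro b β
      simp [mem_iUnion₂]
    have hST : ∀ β, β < o → (∀ i, i < δ → β ∈ S i) →
        β ∈ {β | β < o ∧ (α, false, β) ∉ (⋃ i ∈ Set.Iio δ, B i) ∧
          (α, true, β) ∉ (⋃ i ∈ Set.Iio δ, B i)} := by
      intro β hβ hβS
      refine ⟨hβ, ?_, ?_⟩
      · rw [hmemU]
        rintro ⟨i, hi, hmem⟩
        exact (hβS i hi).2.1 hmem
      · rw [hmemU]
        rintro ⟨i, hi, hmem⟩
        exact (hβS i hi).2.2 hmem
    have hTS : ∀ i, i < δ →
        {β | β < o ∧ (α, false, β) ∉ (⋃ i ∈ Set.Iio δ, B i) ∧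
          (α, true, β) ∉ (⋃ i ∈ Set.Iio δ, B i)} ⊆ S i := by
      intro i hi β hβ
      refine ⟨hβ.1, fun h => hβ.2.1 ?_, fun h => hβ.2.2 ?_⟩
      · exact (hmemU false β).mpr ⟨i, hi, h⟩
      · exact (hmemU true β).mpr ⟨i, hi, h⟩
    refine ⟨fun β hβ => hβ.1, ?_, ?_⟩
    · -- unboundedness
      intro η hη
      haveI hne : Nonempty δ.ToType := Ordinal.nonempty_toType_iff.mpr hδ0.ne'
      set e : Set.Iio δ ≃o δ.ToType := Ordinal.ToType.mk with he
      have hpickE : ∀ (i : δ.ToType) (x : Ordinal), x < o →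
          ∃ γ ∈ S ((e.symm i : Set.Iio δ) : Ordinal), x < γ := by
        intro i x hx
        exact (hclub _ (e.symm i).2).2.1 x hx
      set pick : δ.ToType → Ordinal → Ordinal :=
        fun i x => if h : x < o then (hpickE i x h).choose else 0 with hpick
      have hpick1 : ∀ i x (hx : x < o),
          pick i x ∈ S ((e.symm i : Set.Iio δ) : Ordinal) ∧ x < pick i x := by
        intro i x hx
        obtain ⟨h1, h2⟩ := (hpickE i x hx).choose_spec
        simp only [hpick, dif_pos hx]
        exact ⟨h1, h2⟩
      set g : ℕ → Ordinal := fun n => Nat.rec η (fun _ x => ⨆ i, pick i x) n with hg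
      have hgs : ∀ n, g (n + 1) = ⨆ i, pick i (g n) := fun n => rfl
      have hlt : ∀ n, g n < o := by
        intro n
        induction n with
        | zero => exact hη
        | succ n ih =>
          rw [hgs]
          apply Ordinal.iSup_lt_ord
          · rw [Cardinal.mk_toType, ho, hreg.cof_eq]
            exact hδcard
          · intro i
            exact (hpick1 i (g n) ih).1.1
      have hgmono : ∀ n, g n < g (n + 1) := by
        intro n
        refine lt_of_lt_of_le (hpick1 (Classical.arbitrary _) (g n) (hlt n)).2 ?_
        rw [hgs]
        exact Ordinal.le_iSup _ _
      set γ : Ordinal := ⨆ n, g n with hγ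
      have hγo : γ < o := by
        apply Ordinal.iSup_lt_ord
        · rw [Cardinal.mk_nat, ho, hreg.cof_eq]
          exact hunc
        · exact hlt
      have hηγ : η < γ := lt_of_lt_of_le (hgmono 0) (Ordinal.le_iSup g 1)
      have hγS : ∀ i, i < δ → γ ∈ S i := by
        intro i hi
        set i' : δ.ToType := e ⟨i, hi⟩ with hi'
        have hei : ((e.symm i' : Set.Iio δ) : Ordinal) = i := by
          rw [hi', e.symm_apply_apply]
        set X : Set Ordinal := Set.range (fun n => pick i' (g n)) with hX
        have hXS : X ⊆ S i := by
          rintro _ ⟨n, rfl⟩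
          have := (hpick1 i' (g n) (hlt n)).1
          rwa [hei] at this
        have hXle : ∀ n, pick i' (g n) ≤ γ := by
          intro n
          refine le_trans ?_ (Ordinal.le_iSup g (n + 1))
          rw [hgs]
          exact Ordinal.le_iSup _ _
        have hsupX : sSup X = γ := by
          apply le_antisymm
          · apply csSup_le (Set.range_nonempty _)
            rintro _ ⟨n, rfl⟩
            exact hXle n
          · apply Ordinal.iSup_le
            intro n
            refine le_trans (hpick1 i' (g n) (hlt n)).2.le ?_
            exact le_csSup (Ordinal.bddAbove_range _) ⟨n, rfl⟩
        have := (hclub i hi).2.2 X hXS (Set.range_nonempty _) (hsupX ▸ hγo)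
        rwa [hsupX] at this
      exact ⟨γ, hST γ hγo hγS, hηγ⟩
    · -- closedness
      intro X hX hXne hXlt
      refine hST _ hXlt ?_
      intro i hi
      exact (hclub i hi).2.2 X (hX.trans (hTS i hi)) hXne hXlt
end

section
/- Let κ be a regular cardinal and λ a cardinal. Every subset A of R(κ,λ) whose elements are pairwise incompatible (i.e., for distinct B₁, B₂ ∈ A there is no C ∈ R(κ,λ) with B₁ ∪ B₂ ⊆ C) has cardinality at most 2^κ. That is, R(κ,λ) satisfies the (2^κ)⁺-chain condition. -/
open Cardinal Set

namespace RSetCC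

/-- The underlying type of triples. -/
abbrev Tau : Type 1 := Ordinal.{0} × Bool × Ordinal.{0}

/-- The support of a condition: the set of first coordinates appearing in it. -/
def supp (B : Set Tau) : Set Ordinal.{0} := Prod.fst '' B

theorem mem_supp_of_mem {B : Set Tau} {p : Tau} (hp : p ∈ B) : p.1 ∈ supp B :=
  ⟨p, hp, rfl⟩

/-- The set of triples whose first coordinate lies in `S`. -/
def region (S : Set Ordinal.{0}) : Set Tau := {p | p.1 ∈ S}

/-- The union of the supports of a family of conditions. -/
def supU (M : Set (Set Tau)) : Set Ordinal.{0} := ⋃ B ∈ M, supp B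

theorem supU_mono {M₁ M₂ : Set (Set Tau)} (h : M₁ ⊆ M₂) : supU M₁ ⊆ supU M₂ :=
  biUnion_subset_biUnion_left h

theorem mem_supU {M : Set (Set Tau)} {B : Set Tau} (hB : B ∈ M) {α : Ordinal.{0}}
    (hα : α ∈ supp B) : α ∈ supU M :=
  mem_biUnion hB hα

/-- The key amalgamation lemma: if two conditions agree on the region over `S` and
their supports only meet inside `S`, then their union is again a condition. -/
theorem union_mem_RSet {κ lam : Cardinal.{0}} (hκ : ℵ₀ ≤ κ) {B B' : Set Tau}
    (hB : B ∈ RSet κ lam) (hB' : B' ∈ RSet κ lam) {S : Set Ordinal.{0}}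
    (hsup : supp B ∩ supp B' ⊆ S) (htr : B ∩ region S = B' ∩ region S) :
    B ∪ B' ∈ RSet κ lam := by
  obtain ⟨hB1, hB2, hB3, hB4⟩ := hB
  obtain ⟨hB'1, hB'2, hB'3, hB'4⟩ := hB'
  have key : ∀ α : Ordinal.{0},
      (∀ q : Bool × Ordinal.{0}, ((α, q) ∈ B ∪ B' ↔ (α, q) ∈ B)) ∨
      (∀ q : Bool × Ordinal.{0}, ((α, q) ∈ B ∪ B' ↔ (α, q) ∈ B')) := by
    intro α
    by_cases hαS : α ∈ S
    · left
      intro q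
      constructor
      · rintro (h | h)
        · exact h
        · have : (α, q) ∈ B' ∩ region S := ⟨h, hαS⟩
          rw [← htr] at this
          exact this.1
      · exact fun h => Or.inl h
    · have : α ∉ supp B ∨ α ∉ supp B' := by
        by_contra hcon
        push_neg at hcon
        exact hαS (hsup ⟨hcon.1, hcon.2⟩)
      rcases this with h | h
      · right
        intro q
        constructor
        · rintro (h' | h')
          · exact absurd (mem_supp_of_mem h') h
          · exact h'
        · exact fun h' => Or.inr h'
      · left
        intro q
        constructor
        · rintro (h' | h')
          · exact h'
          · exact absurd (mem_supp_of_mem h') h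
        · exact fun h' => Or.inl h'
  refine ⟨union_subset hB1 hB'1, ?_, ?_, ?_⟩
  · refine (mk_union_le B B').trans ?_
    refine (add_le_add hB2 hB'2).trans_eq ?_
    exact add_eq_self (aleph0_le_lift.mpr hκ)
  · intro α β h
    rcases key α with k | k
    · exact hB3 α β ⟨(k (false, β)).1 h.1, (k (true, β)).1 h.2⟩
    · exact hB'3 α β ⟨(k (false, β)).1 h.1, (k (true, β)).1 h.2⟩
  · intro α hα
    rcases key α with k | k
    · have : {β | β < κ.ord ∧ (α, false, β) ∉ B ∪ B' ∧ (α, true, β) ∉ B ∪ B'} =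
          {β | β < κ.ord ∧ (α, false, β) ∉ B ∧ (α, true, β) ∉ B} := by
        ext β
        exact and_congr Iff.rfl
          (and_congr (not_congr (k (false, β))) (not_congr (k (true, β))))
      rw [this]
      exact hB4 α hα
    · have : {β | β < κ.ord ∧ (α, false, β) ∉ B ∪ B' ∧ (α, true, β) ∉ B ∪ B'} =
          {β | β < κ.ord ∧ (α, false, β) ∉ B' ∧ (α, true, β) ∉ B'} := by
        ext β
        exact and_congr Iff.rfl
          (and_congr (not_congr (k (false, β))) (not_congr (k (true, β))))
      rw [this]
      exact hB'4 α hα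

variable (κ : Cardinal.{0}) (A : Set (Set Tau))

/-- The restricted region used for counting traces. -/
def region' (S : Set Ordinal.{0}) : Set Tau := {p | p.1 ∈ S ∧ p.2.2 < κ.ord}

/-- The set of potential traces on the region over `S`. -/
def traceSet (S : Set Ordinal.{0}) : Set (Set Tau) :=
  {t | t ⊆ region' κ S ∧ #(↥t) ≤ Cardinal.lift.{1} κ}

-- Choice of a realizer in `A` for a trace `t` over `S` (junk value otherwise).
open Classical in
noncomputable def pick (S : Set Ordinal.{0}) (t : Set Tau) : Set Tau :=
  if h : ∃ B ∈ A, B ∩ region S = t then h.choose else ∅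

theorem pick_spec {S : Set Ordinal.{0}} {t : Set Tau}
    (h : ∃ B ∈ A, B ∩ region S = t) :
    pick A S t ∈ A ∧ pick A S t ∩ region S = t := by
  rw [pick]
  rw [dif_pos h]
  exact ⟨h.choose_spec.1, h.choose_spec.2⟩

/-- One step of the closure construction: add realizers for all traces over the
support of the current family. -/
noncomputable def step (M : Set (Set Tau)) : Set (Set Tau) :=
  M ∪ (A ∩ (pick A (supU M) '' traceSet κ (supU M)))

theorem subset_step (M : Set (Set Tau)) : M ⊆ step κ A M := subset_union_left

/-- The index ordinal `(2^κ... actually (lift κ)⁺).ord`. -/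
noncomputable def oIdx : Ordinal.{1} := (Order.succ (Cardinal.lift.{1} κ)).ord

/-- The transfinite chain of closures, of length `(lift κ)⁺`. -/
noncomputable def Mchain : (oIdx κ).ToType → Set (Set Tau) :=
  (wellFounded_lt (α := (oIdx κ).ToType)).fix fun i rec =>
    step κ A (⋃ j : Iio i, rec j.1 j.2)

theorem Mchain_eq (i : (oIdx κ).ToType) :
    Mchain κ A i = step κ A (⋃ j : Iio i, Mchain κ A j.1) :=
  WellFounded.fix_eq _ _ _

theorem Mchain_subset_A (hstep : ∀ M, M ⊆ A → step κ A M ⊆ A) :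
    ∀ i, Mchain κ A i ⊆ A := by
  intro i
  induction i using WellFoundedLT.induction with
  | ind i IH =>
    rw [Mchain_eq]
    refine hstep _ ?_
    exact iUnion_subset fun j => IH j.1 j.2

section Counting

variable {κ}

theorem mk_supp_le {B : Set Tau} (hB : #(↥B) ≤ Cardinal.lift.{1} κ) :
    #(↥(supp B)) ≤ Cardinal.lift.{1} κ :=
  mk_image_le.trans hB

theorem aleph0_le_pow (hκ : ℵ₀ ≤ κ) : ℵ₀ ≤ 2 ^ Cardinal.lift.{1} κ :=
  (aleph0_le_lift.mpr hκ).trans (cantor _).le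

theorem lift_le_pow : Cardinal.lift.{1} κ ≤ 2 ^ Cardinal.lift.{1} κ :=
  (cantor _).le

theorem mk_supU_le (hκ : ℵ₀ ≤ κ) {M : Set (Set Tau)}
    (hM : #(↥M) ≤ 2 ^ Cardinal.lift.{1} κ)
    (hel : ∀ B ∈ M, #(↥B) ≤ Cardinal.lift.{1} κ) :
    #(↥(supU M)) ≤ 2 ^ Cardinal.lift.{1} κ := by
  rw [supU, biUnion_eq_iUnion]
  refine mk_iUnion_le_sum_mk.trans ?_
  refine (sum_le_sum _ (fun _ => Cardinal.lift.{1} κ)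
    (fun B : ↥M => mk_supp_le (hel B.1 B.2))).trans ?_
  rw [sum_const']
  calc #(↥M) * Cardinal.lift.{1} κ
      ≤ 2 ^ Cardinal.lift.{1} κ * 2 ^ Cardinal.lift.{1} κ := mul_le_mul' hM lift_le_pow
    _ = 2 ^ Cardinal.lift.{1} κ := mul_eq_self (aleph0_le_pow hκ)

theorem mk_region'_le (hκ : ℵ₀ ≤ κ) {S : Set Ordinal.{0}}
    (hS : #(↥S) ≤ 2 ^ Cardinal.lift.{1} κ) :
    #(↥(region' κ S)) ≤ 2 ^ Cardinal.lift.{1} κ := by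
  have h2 : ℵ₀ ≤ 2 ^ Cardinal.lift.{1} κ := aleph0_le_pow hκ
  have hinj : Function.Injective
      (fun p : ↥(region' κ S) => ((⟨p.1.1, p.2.1⟩, ⟨p.1.2.2, p.2.2⟩), p.1.2.1) :
        ↥(region' κ S) → (↥S × ↥(Iio κ.ord)) × Bool) := by
    rintro ⟨⟨a, b, c⟩, ha⟩ ⟨⟨a', b', c'⟩, ha'⟩ h
    simp only [Prod.mk.injEq, Subtype.mk.injEq] at h
    simp only [Subtype.mk.injEq, Prod.mk.injEq]
    exact ⟨h.1.1, h.2, congrArg Subtype.val h.1.2⟩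
  refine (mk_le_of_injective hinj).trans ?_
  have hIio : #(↥(Iio κ.ord)) = Cardinal.lift.{1} κ := by
    rw [Ordinal.mk_Iio_ordinal, card_ord]
  have h1 : #((↥S × ↥(Iio κ.ord)) × Bool) =
      #(↥S) * Cardinal.lift.{1} κ * 2 := by
    rw [mk_prod, mk_prod, hIio, mk_bool]
    simp
  rw [h1]
  have h2le : (2 : Cardinal.{1}) ≤ 2 ^ Cardinal.lift.{1} κ := by
    refine le_trans ?_ h2
    exact_mod_cast (nat_lt_aleph0 2).le
  calc #(↥S) * Cardinal.lift.{1} κ * 2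
      ≤ 2 ^ Cardinal.lift.{1} κ * 2 ^ Cardinal.lift.{1} κ * 2 ^ Cardinal.lift.{1} κ :=
        mul_le_mul' (mul_le_mul' hS lift_le_pow) h2le
    _ = 2 ^ Cardinal.lift.{1} κ := by rw [mul_eq_self h2, mul_eq_self h2]

theorem mk_traceSet_le (hκ : ℵ₀ ≤ κ) {S : Set Ordinal.{0}}
    (hS : #(↥S) ≤ 2 ^ Cardinal.lift.{1} κ) :
    #(↥(traceSet κ S)) ≤ 2 ^ Cardinal.lift.{1} κ := by
  have h2 : ℵ₀ ≤ 2 ^ Cardinal.lift.{1} κ := aleph0_le_pow hκ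
  have h0 : #(↥(traceSet κ S)) ≤
      max (#(↥(region' κ S))) ℵ₀ ^ Cardinal.lift.{1} κ :=
    mk_bounded_subset_le (region' κ S) (Cardinal.lift.{1} κ)
  refine h0.trans ?_
  have hmax : max (#(↥(region' κ S))) ℵ₀ ≤ 2 ^ Cardinal.lift.{1} κ :=
    max_le (mk_region'_le hκ hS) h2
  refine (power_le_power_right hmax).trans_eq ?_
  rw [← power_mul, mul_eq_self (aleph0_le_lift.mpr hκ)]

variable (κ)

theorem mk_step_le (hκ : ℵ₀ ≤ κ) {M : Set (Set Tau)}
    (hM : #(↥M) ≤ 2 ^ Cardinal.lift.{1} κ)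
    (hel : ∀ B ∈ M, #(↥B) ≤ Cardinal.lift.{1} κ) :
    #(↥(step κ A M)) ≤ 2 ^ Cardinal.lift.{1} κ := by
  have h2 : ℵ₀ ≤ 2 ^ Cardinal.lift.{1} κ := aleph0_le_pow hκ
  refine (mk_union_le _ _).trans ?_
  have himg : #(↥(A ∩ (pick A (supU M) '' traceSet κ (supU M)))) ≤
      2 ^ Cardinal.lift.{1} κ := by
    refine (mk_le_mk_of_subset inter_subset_right).trans ?_
    refine mk_image_le.trans ?_
    exact mk_traceSet_le hκ (mk_supU_le hκ hM hel)
  exact (add_le_add hM himg).trans_eq (add_eq_self h2)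

theorem card_toType_le :
    #((oIdx κ).ToType) ≤ 2 ^ Cardinal.lift.{1} κ := by
  rw [Cardinal.mk_toType, oIdx, card_ord]
  exact Order.succ_le_of_lt (cantor _)

theorem mk_Mchain_le (hκ : ℵ₀ ≤ κ) (helA : ∀ B ∈ A, #(↥B) ≤ Cardinal.lift.{1} κ)
    (i : (oIdx κ).ToType) : #(↥(Mchain κ A i)) ≤ 2 ^ Cardinal.lift.{1} κ := by
  have h2 : ℵ₀ ≤ 2 ^ Cardinal.lift.{1} κ := aleph0_le_pow hκ
  have hstep : ∀ M, M ⊆ A → step κ A M ⊆ A := fun M hM =>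
    union_subset hM inter_subset_left
  induction i using WellFoundedLT.induction with
  | ind i IH =>
    rw [Mchain_eq]
    have hUA : (⋃ j : Iio i, Mchain κ A j.1) ⊆ A :=
      iUnion_subset fun j => Mchain_subset_A κ A hstep j.1
    refine mk_step_le κ A hκ ?_ fun B hB => helA B (hUA hB)
    refine mk_iUnion_le_sum_mk.trans ?_
    refine (sum_le_sum _ (fun _ => 2 ^ Cardinal.lift.{1} κ)
      (fun j : ↥(Iio i) => IH j.1 j.2)).trans ?_
    rw [sum_const']
    calc #(↥(Iio i)) * 2 ^ Cardinal.lift.{1} κ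
        ≤ 2 ^ Cardinal.lift.{1} κ * 2 ^ Cardinal.lift.{1} κ :=
          mul_le_mul' ((mk_set_le _).trans (card_toType_le κ)) le_rfl
      _ = 2 ^ Cardinal.lift.{1} κ := mul_eq_self h2

end Counting

end RSetCC

/-- `R(κ,λ)` satisfies the `(2^κ)⁺`-chain condition: every pairwise-incompatible
subset of `R(κ,λ)` (ordered by reverse inclusion, so `B₁, B₂` are compatible iff some
`C ∈ R(κ,λ)` contains `B₁ ∪ B₂`) has cardinality at most `2^κ`. -/
theorem rSet_chain_condition (κ lam : Cardinal.{0}) (hreg : κ.IsRegular)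
    (A : Set (Set (Ordinal.{0} × Bool × Ordinal.{0})))
    (hA : A ⊆ RSet κ lam)
    (hanti : ∀ B₁ ∈ A, ∀ B₂ ∈ A, B₁ ≠ B₂ → ¬∃ C ∈ RSet κ lam, B₁ ∪ B₂ ⊆ C) :
    Cardinal.mk ↥A ≤ Cardinal.lift.{1} (2 ^ κ) := by
  classical
  open RSetCC in
  have hκ : ℵ₀ ≤ κ := hreg.aleph0_le
  have hc : ℵ₀ ≤ Cardinal.lift.{1} κ := aleph0_le_lift.mpr hκ
  have h2 : ℵ₀ ≤ 2 ^ Cardinal.lift.{1} κ := hc.trans (cantor _).le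
  rw [lift_power, lift_two]
  by_contra hlt
  push_neg at hlt
  have helA : ∀ B ∈ A, #(↥B) ≤ Cardinal.lift.{1} κ := fun B hB => (hA hB).2.1
  have hstep : ∀ M, M ⊆ A → step κ A M ⊆ A := fun M hM =>
    union_subset hM inter_subset_left
  set M : Set (Set Tau) := ⋃ i, Mchain κ A i with hMdef
  have hMA : M ⊆ A := iUnion_subset fun i => Mchain_subset_A κ A hstep i
  have hMcard : #(↥M) ≤ 2 ^ Cardinal.lift.{1} κ := by
    refine mk_iUnion_le_sum_mk.trans ?_
    refine (sum_le_sum _ (fun _ => 2 ^ Cardinal.lift.{1} κ)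
      (fun i => mk_Mchain_le κ A hκ helA i)).trans ?_
    rw [sum_const']
    calc #((oIdx κ).ToType) * 2 ^ Cardinal.lift.{1} κ
        ≤ 2 ^ Cardinal.lift.{1} κ * 2 ^ Cardinal.lift.{1} κ :=
          mul_le_mul' (card_toType_le κ) le_rfl
      _ = 2 ^ Cardinal.lift.{1} κ := mul_eq_self h2
  obtain ⟨B, hBA, hBM⟩ : ∃ B, B ∈ A ∧ B ∉ M := by
    by_contra hcon
    push_neg at hcon
    exact absurd ((mk_le_mk_of_subset fun B hB => hcon B hB).trans hMcard)
      (not_le.mpr hlt)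
  -- find an index `j` past all the indices needed to cover `supp B ∩ supU M`
  have hreg' : (Order.succ (Cardinal.lift.{1} κ)).IsRegular := isRegular_succ hc
  have holim : Order.IsSuccLimit (oIdx κ) := Cardinal.isSuccLimit_ord (hc.trans (Order.le_succ _))
  set D : Set Ordinal.{0} := supp B ∩ supU M with hDdef
  have hD : #(↥D) ≤ Cardinal.lift.{1} κ :=
    (mk_le_mk_of_subset inter_subset_left).trans (mk_supp_le (helA B hBA))
  have hgex : ∀ x : ↥D, ∃ i : (oIdx κ).ToType, ↑x ∈ supU (Mchain κ A i) := by
    intro x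
    obtain ⟨B', hB'M, hx⟩ : ∃ B' ∈ M, (x : Ordinal.{0}) ∈ supp B' := by
      have h := x.2.2
      rw [supU] at h
      simpa using h
    obtain ⟨i, hi⟩ := mem_iUnion.mp hB'M
    exact ⟨i, mem_supU hi hx⟩
  choose g hg using hgex
  set e := Ordinal.ToType.mk (o := oIdx κ) with hedef
  set f : ↥D → Ordinal.{1} := fun x => Order.succ ((e.symm (g x)).1) with hfdef
  have hf : ∀ x, f x < oIdx κ := fun x => holim.succ_lt (e.symm (g x)).2
  have hsup : (⨆ x, f x) < oIdx κ := by
    refine Ordinal.iSup_lt_ord ?_ hf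
    have : (oIdx κ).cof = Order.succ (Cardinal.lift.{1} κ) := hreg'.cof_eq
    rw [this]
    exact hD.trans_lt (Order.lt_succ _)
  set j : (oIdx κ).ToType := e ⟨_, hsup⟩ with hjdef
  have hgj : ∀ x : ↥D, g x < j := by
    intro x
    have h1 : (e.symm (g x)).1 < ⨆ x, f x :=
      lt_of_lt_of_le (Order.lt_succ _) (Ordinal.le_iSup f x)
    have h2' : e.symm (g x) < (⟨_, hsup⟩ : Iio (oIdx κ)) := h1
    have := e.lt_iff_lt.mpr h2'
    rwa [OrderIso.apply_symm_apply] at this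
  set Sj : Set Ordinal.{0} := supU (⋃ j' : Iio j, Mchain κ A j'.1) with hSjdef
  have hDSj : D ⊆ Sj := by
    intro α hα
    have hmem := hg ⟨α, hα⟩
    have hsub : Mchain κ A (g ⟨α, hα⟩) ⊆ ⋃ j' : Iio j, Mchain κ A j'.1 :=
      subset_iUnion (fun j' : Iio j => Mchain κ A j'.1) ⟨g ⟨α, hα⟩, hgj ⟨α, hα⟩⟩
    exact supU_mono hsub hmem
  set t : Set Tau := B ∩ region Sj with htdef
  have hreal : ∃ C ∈ A, C ∩ region Sj = t := ⟨B, hBA, rfl⟩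
  have htmem : t ∈ traceSet κ Sj :=
    ⟨fun p hp => ⟨hp.2, ((hA hBA).1 hp.1).2⟩,
      (mk_le_mk_of_subset inter_subset_left).trans (helA B hBA)⟩
  obtain ⟨hB'A, hB'tr⟩ := pick_spec A hreal
  set B' := pick A Sj t with hB'def
  have hB'chain : B' ∈ Mchain κ A j := by
    rw [Mchain_eq]
    exact Or.inr ⟨hB'A, mem_image_of_mem _ htmem⟩
  have hB'M : B' ∈ M := mem_iUnion.mpr ⟨j, hB'chain⟩
  have hne : B ≠ B' := fun h => hBM (h ▸ hB'M)
  have hsupp : supp B ∩ supp B' ⊆ Sj := fun α hα =>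
    hDSj ⟨hα.1, mem_supU hB'M hα.2⟩
  have htr : B ∩ region Sj = B' ∩ region Sj := by rw [hB'tr]
  exact hanti B hBA B' hB'A hne
    ⟨B ∪ B', union_mem_RSet hκ (hA hBA) (hA hB'A) hsupp htr, Set.Subset.rfl⟩
end

section
/- Let κ be a regular uncountable cardinal and λ a cardinal. Suppose B ⊆ λ × 2 × κ satisfies: |B| ≤ κ; for all α < λ and β < κ not both (α,0,β) ∈ B and (α,1,β) ∈ B; and for every α < λ the set {β < κ : (α,0,β) ∉ B and (α,1,β) ∉ B} contains a closed unbounded subset of κ. Then there exists B' ∈ R(κ,λ) with B ⊆ B'. -/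
open Cardinal Set

/-- If `B ⊆ λ × 2 × κ` has size `≤ κ`, never contains both `(α,0,β)` and `(α,1,β)`,
and for each `α < λ` the set `{β < κ : (α,0,β) ∉ B ∧ (α,1,β) ∉ B}` merely *contains*
a club subset of `κ`, then `B` extends to some `B' ∈ R(κ,λ)`. -/
theorem exists_rSet_superset (κ lam : Cardinal.{0}) (hreg : κ.IsRegular) (hunc : ℵ₀ < κ)
    (B : Set (Ordinal.{0} × Bool × Ordinal.{0}))
    (hsub : B ⊆ {p | p.1 < lam.ord ∧ p.2.2 < κ.ord})
    (hcard : Cardinal.mk ↥B ≤ Cardinal.lift.{1} κ)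
    (hfun : ∀ α β, ¬((α, false, β) ∈ B ∧ (α, true, β) ∈ B))
    (hclub : ∀ α < lam.ord, ∃ C, IsClubIn C κ.ord ∧
        C ⊆ {β | β < κ.ord ∧ (α, false, β) ∉ B ∧ (α, true, β) ∉ B}) :
    ∃ B' ∈ RSet κ lam, B ⊆ B' := by
  classical
  have hlim : Order.IsSuccLimit (Cardinal.ord κ) := Cardinal.isSuccLimit_ord hreg.aleph0_le
  have hκlift : ℵ₀ ≤ Cardinal.lift.{1} κ := by
    rw [← Cardinal.lift_aleph0.{1,0}]
    exact Cardinal.lift_le.mpr hreg.aleph0_le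
  -- choose clubs
  have hCex : ∀ α : Ordinal.{0}, ∃ C : Set Ordinal.{0},
      α < lam.ord → IsClubIn C κ.ord ∧
        C ⊆ {β | β < κ.ord ∧ (α, false, β) ∉ B ∧ (α, true, β) ∉ B} := by
    intro α
    by_cases h : α < lam.ord
    · obtain ⟨C, h1, h2⟩ := hclub α h
      exact ⟨C, fun _ => ⟨h1, h2⟩⟩
    · exact ⟨∅, fun h' => absurd h' h⟩
  choose C hC using hCex
  set A : Set Ordinal.{0} := Prod.fst '' B with hA
  set E : Set (Ordinal.{0} × Bool × Ordinal.{0}) :=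
    {p | p.1 ∈ A ∧ p.2.1 = false ∧ p.2.2 < κ.ord ∧ p.2.2 ∉ C p.1 ∧ (p.1, true, p.2.2) ∉ B}
    with hE
  refine ⟨B ∪ E, ⟨?_, ?_, ?_, ?_⟩, subset_union_left⟩
  · -- bounds
    rintro p (hp | hp)
    · exact hsub hp
    · obtain ⟨hpA, -, hpκ, -, -⟩ := hp
      obtain ⟨q, hq, hq1⟩ := hpA
      exact ⟨hq1 ▸ (hsub hq).1, hpκ⟩
  · -- cardinality
    have hEcard : Cardinal.mk ↥E ≤ Cardinal.lift.{1} κ := by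
      have hinj : Function.Injective (fun p : ↥E =>
          ((⟨p.1.1, p.2.1⟩ : ↥A), (⟨p.1.2.2, p.2.2.2.1⟩ : ↥(Set.Iio κ.ord)))) := by
        rintro ⟨⟨a, b, c⟩, ha⟩ ⟨⟨a', b', c'⟩, ha'⟩ h
        simp only [Prod.mk.injEq, Subtype.mk.injEq] at h
        have hb : b = false := ha.2.1
        have hb' : b' = false := ha'.2.1
        obtain ⟨rfl, hc⟩ := h; subst hb hb'; cases hc; rfl
      calc Cardinal.mk ↥E ≤ Cardinal.mk (↥A × ↥(Set.Iio κ.ord)) :=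
            Cardinal.mk_le_of_injective hinj
        _ = Cardinal.mk ↥A * Cardinal.mk ↥(Set.Iio κ.ord) := by
            rw [Cardinal.mk_prod, Cardinal.lift_id, Cardinal.lift_id]
        _ ≤ Cardinal.lift.{1} κ * Cardinal.lift.{1} κ := by
            apply mul_le_mul' (le_trans Cardinal.mk_image_le hcard)
            rw [Ordinal.mk_Iio_ordinal, Cardinal.card_ord]
        _ = Cardinal.lift.{1} κ := Cardinal.mul_eq_self hκlift
    have h2 : Cardinal.mk ↥(B ∪ E : Set _) ≤ Cardinal.mk ↥B + Cardinal.mk ↥E :=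
      Cardinal.mk_union_le B E
    calc Cardinal.mk ↥(B ∪ E : Set _) ≤ Cardinal.mk ↥B + Cardinal.mk ↥E := h2
      _ ≤ Cardinal.lift.{1} κ + Cardinal.lift.{1} κ := add_le_add hcard hEcard
      _ = Cardinal.lift.{1} κ := Cardinal.add_eq_self hκlift
  · -- no contradiction
    rintro α β ⟨h0, h1⟩
    have h1' : (α, true, β) ∈ B := by
      rcases h1 with h1 | h1
      · exact h1
      · exact absurd h1.2.1 (by simp)
    rcases h0 with h0 | h0
    · exact hfun α β ⟨h0, h1'⟩
    · exact h0.2.2.2.2 h1'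
  · -- clubs
    intro α hα
    by_cases hAα : α ∈ A
    · have heq : {β | β < κ.ord ∧ (α, false, β) ∉ B ∪ E ∧ (α, true, β) ∉ B ∪ E} = C α := by
        ext β
        constructor
        · rintro ⟨hβκ, hf, ht⟩
          by_contra hβC
          by_cases htB : (α, true, β) ∈ B
          · exact ht (Or.inl htB)
          · exact hf (Or.inr ⟨hAα, rfl, hβκ, hβC, htB⟩)
        · intro hβC
          obtain ⟨hβκ, hfB, htB⟩ := (hC α hα).2 hβC
          refine ⟨hβκ, ?_, ?_⟩
          · rintro (h | h)
            · exact hfB h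
            · exact h.2.2.2.1 hβC
          · rintro (h | h)
            · exact htB h
            · exact absurd h.2.1 (by simp)
      rw [heq]
      exact (hC α hα).1
    · have hnone : ∀ b β, (α, b, β) ∉ B ∪ E := by
        rintro b β (h | h)
        · exact hAα ⟨(α, b, β), h, rfl⟩
        · exact hAα h.1
      have heq : {β | β < κ.ord ∧ (α, false, β) ∉ B ∪ E ∧ (α, true, β) ∉ B ∪ E}
          = Set.Iio κ.ord := by
        ext β
        simp only [mem_setOf_eq, mem_Iio]
        exact ⟨fun h => h.1, fun h => ⟨h, hnone _ _, hnone _ _⟩⟩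
      rw [heq]
      exact ⟨subset_rfl, fun η hη => ⟨η + 1, hlim.succ_lt hη, lt_add_one η⟩,
        fun X _ _ h => h⟩
end

section
/- Let λ be a cardinal. Let (B_n)_{n<ω} be a sequence of elements of R(ℵ₀,λ) increasing with respect to inclusion, let B_ω = ⋃_{n<ω} B_n, let f be a bijection from ω onto the domain of B_ω, and let g be an injective function from {(γ,n) : γ < n < ω} into ω such that for all γ < n < ω, all i < 2 and all m < ω, (f(γ), i, g(γ,n)) ∉ B_m. Then there exists B' ∈ R(ℵ₀,λ) with B_ω ⊆ B'. -/
open Cardinal Set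

/-- Baumgartner's partial order `R(ℵ₀,λ)`: subsets `B` of `λ × 2 × ω`
(here `2` is rendered as `Bool`, with `false` for `0` and `true` for `1`, and the third
coordinate ranges over `ℕ`) such that `B` is countable, never both `(α,0,β) ∈ B` and
`(α,1,β) ∈ B`, and for each `α < λ` the set `{β < ω : (α,0,β) ∉ B ∧ (α,1,β) ∉ B}`
is infinite. -/
def R0Set (lam : Cardinal.{0}) : Set (Set (Ordinal.{0} × Bool × ℕ)) :=
  {B | B ⊆ {p | p.1 < lam.ord} ∧
       B.Countable ∧
       (∀ α β, ¬((α, false, β) ∈ B ∧ (α, true, β) ∈ B)) ∧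
       ∀ α < lam.ord, {β : ℕ | (α, false, β) ∉ B ∧ (α, true, β) ∉ B}.Infinite}

/-- The key step of Baumgartner's Lemma 6.10 for `κ = ℵ₀`: if `(B_n)_{n<ω}` is an
increasing chain in `R(ℵ₀,λ)`, `f` is a bijection from `ω` onto the domain of
`B_ω = ⋃_{n<ω} B_n`, and `g` is injective on `{(γ,n) : γ < n < ω}` with
`(f γ, i, g (γ,n)) ∉ B_m` for all `γ < n < ω`, `i < 2`, `m < ω`,
then `B_ω` extends to some `B' ∈ R(ℵ₀,λ)`. -/
theorem union_chain_extends_aleph0 (lam : Cardinal.{0})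
    (B : ℕ → Set (Ordinal.{0} × Bool × ℕ))
    (hB : ∀ n, B n ∈ R0Set lam)
    (hmono : ∀ m n, m < n → B m ⊆ B n)
    (f : ℕ → Ordinal.{0})
    (hf : Set.BijOn f Set.univ {α | ∃ i β, (α, i, β) ∈ ⋃ n, B n})
    (g : ℕ × ℕ → ℕ)
    (hg : Set.InjOn g {p | p.1 < p.2})
    (havoid : ∀ γ n, γ < n → ∀ i : Bool, ∀ m, (f γ, i, g (γ, n)) ∉ B m) :
    ∃ B' ∈ R0Set lam, (⋃ n, B n) ⊆ B' := by
  have hmono' : ∀ m n, m ≤ n → B m ⊆ B n := by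
    intro m n h
    rcases lt_or_eq_of_le h with h | rfl
    · exact hmono m n h
    · exact subset_rfl
  refine ⟨⋃ n, B n, ⟨?_, ?_, ?_, ?_⟩, subset_rfl⟩
  · exact Set.iUnion_subset fun n => (hB n).1
  · exact Set.countable_iUnion fun n => (hB n).2.1
  · rintro α β ⟨h0, h1⟩
    obtain ⟨m, hm⟩ := Set.mem_iUnion.1 h0
    obtain ⟨n, hn⟩ := Set.mem_iUnion.1 h1
    exact (hB (max m n)).2.2.1 α β
      ⟨hmono' m (max m n) (le_max_left m n) hm, hmono' n (max m n) (le_max_right m n) hn⟩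
  · intro α hα
    by_cases hdom : ∃ i β, (α, i, β) ∈ ⋃ n, B n
    · obtain ⟨γ, -, hγ⟩ := hf.surjOn hdom
      have key : (fun n => g (γ, n)) '' Set.Ioi γ ⊆
          {β : ℕ | (α, false, β) ∉ ⋃ n, B n ∧ (α, true, β) ∉ ⋃ n, B n} := by
        rintro β ⟨n, hn, rfl⟩
        constructor
        · intro hmem
          obtain ⟨m, hm⟩ := Set.mem_iUnion.1 hmem
          exact havoid γ n hn false m (hγ ▸ hm)
        · intro hmem
          obtain ⟨m, hm⟩ := Set.mem_iUnion.1 hmem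
          exact havoid γ n hn true m (hγ ▸ hm)
      have hinj : Set.InjOn (fun n => g (γ, n)) (Set.Ioi γ) := by
        intro a ha b hb hab
        have := hg (show ((γ, a) : ℕ × ℕ) ∈ {p : ℕ × ℕ | p.1 < p.2} from ha)
          (show ((γ, b) : ℕ × ℕ) ∈ {p : ℕ × ℕ | p.1 < p.2} from hb) hab
        exact congrArg Prod.snd this
      exact ((Set.Ioi_infinite γ).image hinj).mono key
    · have : {β : ℕ | (α, false, β) ∉ ⋃ n, B n ∧ (α, true, β) ∉ ⋃ n, B n} = Set.univ := by
        apply Set.eq_univ_of_forall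
        intro β
        exact ⟨fun h => hdom ⟨false, β, h⟩, fun h => hdom ⟨true, β, h⟩⟩
      rw [this]
      exact Set.infinite_univ
end

section
/- Let κ be a regular uncountable cardinal and λ a cardinal. If B ∈ R(κ,λ), E ⊆ λ, and F ⊆ κ is a closed subset of κ with |F| < κ, then B \ (E × 2 × F) ∈ R(κ,λ). -/
open Cardinal Set

/-- For regular uncountable `κ`: removing `E × 2 × F` from a condition `B ∈ R(κ,λ)`,
where `E ⊆ λ` and `F ⊆ κ` is closed with `|F| < κ`, yields again an element of `R(κ,λ)`. -/
theorem rSet_sdiff_mem (κ lam : Cardinal.{0}) (hreg : κ.IsRegular) (hunc : ℵ₀ < κ)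
    (B : Set (Ordinal.{0} × Bool × Ordinal.{0})) (hB : B ∈ RSet κ lam)
    (E : Set Ordinal.{0}) (hE : E ⊆ Set.Iio lam.ord)
    (F : Set Ordinal.{0}) (hF : F ⊆ Set.Iio κ.ord)
    (hFclosed : ∀ X ⊆ F, X.Nonempty → sSup X < κ.ord → sSup X ∈ F)
    (hFcard : Cardinal.mk ↥F < Cardinal.lift.{1} κ) :
    B \ {p | p.1 ∈ E ∧ p.2.2 ∈ F} ∈ RSet κ lam := by
  obtain ⟨hsub, hcard, hdisj, hclub⟩ := hB
  set S : Set (Ordinal.{0} × Bool × Ordinal.{0}) := {p | p.1 ∈ E ∧ p.2.2 ∈ F} with hS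
  refine ⟨fun p hp => hsub hp.1,
    le_trans (Cardinal.mk_le_mk_of_subset diff_subset) hcard,
    fun α β h => hdisj α β ⟨h.1.1, h.2.1⟩, ?_⟩
  intro α hα
  obtain ⟨hA1, hA2, hA3⟩ := hclub α hα
  set A : Set Ordinal.{0} :=
    {β | β < κ.ord ∧ (α, false, β) ∉ B ∧ (α, true, β) ∉ B} with hAdef
  set A' : Set Ordinal.{0} :=
    {β | β < κ.ord ∧ (α, false, β) ∉ B \ S ∧ (α, true, β) ∉ B \ S} with hA'def
  have hAA' : A ⊆ A' := fun β hβ => ⟨hβ.1, fun h => hβ.2.1 h.1, fun h => hβ.2.2 h.1⟩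
  by_cases hαE : α ∈ E
  · have hmem : ∀ β, β ∈ A' ↔ β ∈ A ∨ (β < κ.ord ∧ β ∈ F) := by
      intro β
      constructor
      · rintro ⟨hβκ, h0, h1⟩
        by_cases hβF : β ∈ F
        · exact Or.inr ⟨hβκ, hβF⟩
        · exact Or.inl ⟨hβκ, fun hb => h0 ⟨hb, fun hs => hβF hs.2⟩,
            fun hb => h1 ⟨hb, fun hs => hβF hs.2⟩⟩
      · rintro (hβ | ⟨hβκ, hβF⟩)
        · exact hAA' hβ
        · exact ⟨hβκ, fun h => h.2 ⟨hαE, hβF⟩, fun h => h.2 ⟨hαE, hβF⟩⟩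
    refine ⟨fun β hβ => hβ.1, fun η hη => (hA2 η hη).imp
      (fun γ hγ => ⟨hAA' hγ.1, hγ.2⟩), ?_⟩
    intro X hX hXne hXsup
    set X0 : Set Ordinal.{0} := X ∩ A with hX0def
    set X1 : Set Ordinal.{0} := X ∩ F with hX1def
    have hXun : X = X0 ∪ X1 := by
      refine subset_antisymm (fun β hβ => ?_)
        (union_subset inter_subset_left inter_subset_left)
      rcases (hmem β).1 (hX hβ) with h | h
      · exact Or.inl ⟨hβ, h⟩
      · exact Or.inr ⟨hβ, h.2⟩
    have hbdd : BddAbove X := ⟨κ.ord, fun x hx => le_of_lt (hX hx).1⟩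
    have hbdd0 : BddAbove X0 := hbdd.mono inter_subset_left
    have hbdd1 : BddAbove X1 := hbdd.mono inter_subset_left
    rcases X0.eq_empty_or_nonempty with h0 | h0
    · have hX1F : X ⊆ F := by
        intro β hβ
        rcases (hXun ▸ hβ) with h | h
        · exact absurd h (h0 ▸ notMem_empty β)
        · exact h.2
      exact (hmem _).2 (Or.inr ⟨hXsup, hFclosed X hX1F hXne hXsup⟩)
    rcases X1.eq_empty_or_nonempty with h1 | h1
    · have hXA : X ⊆ A := by
        intro β hβ
        rcases (hXun ▸ hβ) with h | h
        · exact h.2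
        · exact absurd h (h1 ▸ notMem_empty β)
      exact hAA' (hA3 X hXA hXne hXsup)
    have hsupeq : sSup X = sSup X0 ⊔ sSup X1 := by
      rw [hXun]; exact csSup_union hbdd0 h0 hbdd1 h1
    rcases le_total (sSup X1) (sSup X0) with hle | hle
    · have : sSup X = sSup X0 := by rw [hsupeq, sup_eq_left.2 hle]
      rw [this]
      exact hAA' (hA3 X0 inter_subset_right h0 (this ▸ hXsup))
    · have : sSup X = sSup X1 := by rw [hsupeq, sup_eq_right.2 hle]
      rw [this]
      exact (hmem _).2 (Or.inr ⟨this ▸ hXsup,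
        hFclosed X1 inter_subset_right h1 (this ▸ hXsup)⟩)
  · have heq : A' = A := by
      ext β
      constructor
      · rintro ⟨hβκ, h0, h1⟩
        exact ⟨hβκ, fun hb => h0 ⟨hb, fun hs => hαE hs.1⟩,
          fun hb => h1 ⟨hb, fun hs => hαE hs.1⟩⟩
      · exact fun h => hAA' h
    rw [show A' = A from heq]
    exact ⟨hA1, hA2, hA3⟩
end
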